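/- arXiv:2603.22936 — 3 statements merged into one kernel-verified Lean document; each statement's English description precedes it below -/
import Mathlib

section
/- Let k be an integer with |k| ≥ 1, R > 1, and let φ, ω : [1,R] → ℂ be C² functions with φ(1) = φ(R) = 0 satisfying φ'' − ((k² − 1/4)/r²) φ = ω. Then there is an absolute constant C > 0 (independent of k, R, φ, ω) such that ‖φ'‖²_{L²} + k² ‖φ/r‖²_{L²} ≤ C k^{-2} ‖r ω‖²_{L²}. -/
open MeasureTheory Set

theorem stmt_4 :
    ∃ C > (0 : ℝ), ∀ (k : ℤ), 1 ≤ |k| → ∀ (R : ℝ), 1 < R →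
    ∀ (φ φ' φ'' ω : ℝ → ℂ),
    (∀ r ∈ Icc (1 : ℝ) R, HasDerivAt φ (φ' r) r) →
    (∀ r ∈ Icc (1 : ℝ) R, HasDerivAt φ' (φ'' r) r) →
    ContinuousOn φ'' (Icc (1 : ℝ) R) →
    φ 1 = 0 → φ R = 0 →
    (∀ r ∈ Icc (1 : ℝ) R,
      φ'' r - (((k : ℂ) ^ 2 - 1 / 4) / (r : ℂ) ^ 2) * φ r = ω r) →
    (∫ r in Ioo (1 : ℝ) R, ‖φ' r‖ ^ 2) +
      (k : ℝ) ^ 2 * ∫ r in Ioo (1 : ℝ) R, ‖φ r / (r : ℂ)‖ ^ 2 ≤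
      C * ((k : ℝ) ^ 2)⁻¹ * ∫ r in Ioo (1 : ℝ) R, r ^ 2 * ‖ω r‖ ^ 2 := by
  refine ⟨2, by norm_num, ?_⟩
  intro k hk R hR φ φ' φ'' ω hφ hφ' hφ''c h1 hRend heq
  have hab : (1:ℝ) ≤ R := hR.le
  have hk2 : (1:ℝ) ≤ (k:ℝ)^2 := by
    have h : (1:ℤ) ≤ k^2 := by nlinarith [sq_abs k, hk]
    exact_mod_cast h
  have hkpos : (0:ℝ) < (k:ℝ)^2 := lt_of_lt_of_le one_pos hk2
  -- continuity
  have hcφ : ContinuousOn φ (Icc 1 R) := fun r hr => (hφ r hr).continuousAt.continuousWithinAt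
  have hcφ' : ContinuousOn φ' (Icc 1 R) := fun r hr => (hφ' r hr).continuousAt.continuousWithinAt
  have hrpos : ∀ r ∈ Icc (1:ℝ) R, (0:ℝ) < r := fun r hr => lt_of_lt_of_le one_pos hr.1
  have hrne : ∀ r ∈ Icc (1:ℝ) R, ((r:ℂ))^2 ≠ 0 := by
    intro r hr
    have : (r:ℂ) ≠ 0 := by exact_mod_cast (hrpos r hr).ne'
    exact pow_ne_zero 2 this
  have hcω : ContinuousOn ω (Icc 1 R) := by
    have h : ContinuousOn (fun r => φ'' r - (((k:ℂ)^2 - 1/4)/(r:ℂ)^2) * φ r) (Icc 1 R) := by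
      refine hφ''c.sub (ContinuousOn.mul ?_ hcφ)
      exact ContinuousOn.div continuousOn_const
        ((Complex.continuous_ofReal.continuousOn).pow 2) hrne
    exact h.congr fun r hr => (heq r hr).symm
  -- derivative of r ↦ Re(φ' r * conj (φ r))
  have hconj : ∀ r ∈ Icc (1:ℝ) R,
      HasDerivAt (fun s => (starRingEnd ℂ) (φ s)) ((starRingEnd ℂ) (φ' r)) r := by
    intro r hr
    exact Complex.conjCLE.hasFDerivAt.comp_hasDerivAt r (hφ r hr)
  have hF : ∀ r ∈ Icc (1:ℝ) R,
      HasDerivAt (fun s => (φ' s * (starRingEnd ℂ) (φ s)).re)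
        ((φ'' r * (starRingEnd ℂ) (φ r)).re + ‖φ' r‖^2) r := by
    intro r hr
    have h := Complex.reCLM.hasFDerivAt.comp_hasDerivAt r ((hφ' r hr).mul (hconj r hr))
    convert h using 1
    · rfl
    · rfl
    · rfl
    simp only [Function.comp, Complex.reCLM_apply, Complex.add_re, Complex.mul_conj]
    rw [Complex.sq_norm]
    simp
  -- FTC
  have hcont_integrand : ContinuousOn
      (fun r => (φ'' r * (starRingEnd ℂ) (φ r)).re + ‖φ' r‖^2) (Icc 1 R) := by
    refine ContinuousOn.add ?_ ((hcφ'.norm).pow 2)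
    exact Complex.continuous_re.comp_continuousOn
      (hφ''c.mul (continuous_star.comp_continuousOn hcφ))
  have hFTC : ∫ r in (1:ℝ)..R, ((φ'' r * (starRingEnd ℂ) (φ r)).re + ‖φ' r‖^2) = 0 := by
    rw [intervalIntegral.integral_eq_sub_of_hasDerivAt
      (fun r hr => hF r (by rwa [uIcc_of_le hab] at hr))
      (by apply ContinuousOn.intervalIntegrable; rwa [uIcc_of_le hab])]
    simp [h1, hRend]
  -- integrability on Ioo
  have hIoo : Ioo (1:ℝ) R ⊆ Icc 1 R := Ioo_subset_Icc_self
  have hint : ∀ f : ℝ → ℝ, ContinuousOn f (Icc 1 R) → IntegrableOn f (Ioo 1 R) :=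
    fun f hf => (hf.integrableOn_compact isCompact_Icc).mono_set hIoo
  have hint1 : IntegrableOn (fun r => ‖φ' r‖^2) (Ioo 1 R) := hint _ ((hcφ'.norm).pow 2)
  have hint2 : IntegrableOn (fun r => (φ'' r * (starRingEnd ℂ) (φ r)).re) (Ioo 1 R) :=
    hint _ (Complex.continuous_re.comp_continuousOn
      (hφ''c.mul (continuous_star.comp_continuousOn hcφ)))
  have hint3 : IntegrableOn (fun r => (ω r * (starRingEnd ℂ) (φ r)).re) (Ioo 1 R) :=
    hint _ (Complex.continuous_re.comp_continuousOn
      (hcω.mul (continuous_star.comp_continuousOn hcφ)))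
  have hint4 : IntegrableOn (fun r => ‖φ r / (r:ℂ)‖^2) (Ioo 1 R) := by
    refine hint _ (ContinuousOn.pow (ContinuousOn.norm ?_) 2)
    exact hcφ.div (Complex.continuous_ofReal.continuousOn) fun r hr => by
      exact_mod_cast (hrpos r hr).ne'
  have hint5 : IntegrableOn (fun r => r^2 * ‖ω r‖^2) (Ioo 1 R) :=
    hint _ (((continuousOn_id.pow 2)).mul ((hcω.norm).pow 2))
  set A := ∫ r in Ioo (1:ℝ) R, ‖φ' r‖^2 with hA
  set B := ∫ r in Ioo (1:ℝ) R, ‖φ r / (r:ℂ)‖^2 with hB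
  set W := ∫ r in Ioo (1:ℝ) R, r^2 * ‖ω r‖^2 with hW
  set E2 := ∫ r in Ioo (1:ℝ) R, (φ'' r * (starRingEnd ℂ) (φ r)).re with hE2
  set E3 := ∫ r in Ioo (1:ℝ) R, (ω r * (starRingEnd ℂ) (φ r)).re with hE3
  have hAnn : 0 ≤ A := setIntegral_nonneg measurableSet_Ioo fun r _ => by positivity
  have hBnn : 0 ≤ B := setIntegral_nonneg measurableSet_Ioo fun r _ => by positivity
  have hWnn : 0 ≤ W := setIntegral_nonneg measurableSet_Ioo fun r _ => by positivity
  -- key 1 : E2 + A = 0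
  have key1 : E2 + A = 0 := by
    have h := hFTC
    rw [intervalIntegral.integral_of_le hab, integral_Ioc_eq_integral_Ioo,
      integral_add hint2 hint1] at h
    exact h
  -- pointwise rewriting of E2
  have hnorm_div : ∀ r ∈ Ioo (1:ℝ) R, ‖φ r / (r:ℂ)‖^2 = Complex.normSq (φ r) / r^2 := by
    intro r hr
    have hr0 : (0:ℝ) < r := hrpos r (hIoo hr)
    rw [norm_div, div_pow, Complex.sq_norm, Complex.norm_real,
      Real.norm_eq_abs, abs_of_pos hr0]
  have key2 : E2 = E3 + ((k:ℝ)^2 - 1/4) * B := by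
    rw [hE2, hE3, hB, ← integral_const_mul, ← integral_add hint3 (hint4.const_mul _)]
    refine setIntegral_congr_fun measurableSet_Ioo fun r hr => ?_
    have hricc := hIoo hr
    have hr0 : (0:ℝ) < r := hrpos r hricc
    have heqr : φ'' r = ω r + (((k:ℂ)^2 - 1/4)/(r:ℂ)^2) * φ r := by
      have h := heq r hricc; linear_combination h
    have hc : ((k:ℂ)^2 - 1/4)/(r:ℂ)^2 = ((((k:ℝ)^2 - 1/4)/r^2 : ℝ) : ℂ) := by
      push_cast; ring
    rw [heqr, add_mul, Complex.add_re]
    congr 1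
    rw [mul_assoc, Complex.mul_conj, hc, ← Complex.ofReal_mul, Complex.ofReal_re,
      hnorm_div r hr]
    ring
  -- key 3 : -E3 ≤ (1/(2 k²)) W + (k²/2) B
  have key3 : -E3 ≤ (1/(2*(k:ℝ)^2)) * W + ((k:ℝ)^2/2) * B := by
    have hmono : ∫ r in Ioo (1:ℝ) R, (-(ω r * (starRingEnd ℂ) (φ r)).re) ≤
        ∫ r in Ioo (1:ℝ) R, ((1/(2*(k:ℝ)^2)) * (r^2 * ‖ω r‖^2) + ((k:ℝ)^2/2) * ‖φ r / (r:ℂ)‖^2) := by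
      refine setIntegral_mono_on hint3.neg ((hint5.const_mul _).add (hint4.const_mul _))
        measurableSet_Ioo fun r hr => ?_
      have hr0 : (0:ℝ) < r := hrpos r (hIoo hr)
      have habs : -(ω r * (starRingEnd ℂ) (φ r)).re ≤ ‖ω r‖ * ‖φ r‖ := by
        calc -(ω r * (starRingEnd ℂ) (φ r)).re ≤ |(ω r * (starRingEnd ℂ) (φ r)).re| := neg_le_abs _
        _ ≤ ‖ω r * (starRingEnd ℂ) (φ r)‖ := Complex.abs_re_le_norm _
        _ = ‖ω r‖ * ‖φ r‖ := by rw [norm_mul, RCLike.norm_conj]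
      have hb : ‖φ r / (r:ℂ)‖ = ‖φ r‖ / r := by
        rw [norm_div, Complex.norm_real, Real.norm_eq_abs, abs_of_pos hr0]
      have hprod : ‖ω r‖ * ‖φ r‖ = (r * ‖ω r‖) * ‖φ r / (r:ℂ)‖ := by
        rw [hb]; field_simp
      have hamgm : (r * ‖ω r‖) * ‖φ r / (r:ℂ)‖ ≤
          (1/(2*(k:ℝ)^2)) * (r * ‖ω r‖)^2 + ((k:ℝ)^2/2) * ‖φ r / (r:ℂ)‖^2 := by
        have hsq := sq_nonneg (r * ‖ω r‖ - (k:ℝ)^2 * ‖φ r / (r:ℂ)‖)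
        have hki : (0:ℝ) < (2*(k:ℝ)^2) := by positivity
        have h3 : (r * ‖ω r‖) * ‖φ r / (r:ℂ)‖ ≤
            ((r * ‖ω r‖)^2 + ((k:ℝ)^2)^2 * ‖φ r / (r:ℂ)‖^2)/(2*(k:ℝ)^2) := by
          rw [le_div_iff₀ hki]; nlinarith [hsq]
        calc (r * ‖ω r‖) * ‖φ r / (r:ℂ)‖ ≤
            ((r * ‖ω r‖)^2 + ((k:ℝ)^2)^2 * ‖φ r / (r:ℂ)‖^2)/(2*(k:ℝ)^2) := h3
        _ = (1/(2*(k:ℝ)^2)) * (r * ‖ω r‖)^2 + ((k:ℝ)^2/2) * ‖φ r / (r:ℂ)‖^2 := by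
            field_simp
      calc -(ω r * (starRingEnd ℂ) (φ r)).re ≤ ‖ω r‖ * ‖φ r‖ := habs
      _ = (r * ‖ω r‖) * ‖φ r / (r:ℂ)‖ := hprod
      _ ≤ (1/(2*(k:ℝ)^2)) * (r * ‖ω r‖)^2 + ((k:ℝ)^2/2) * ‖φ r / (r:ℂ)‖^2 := hamgm
      _ = (1/(2*(k:ℝ)^2)) * (r^2 * ‖ω r‖^2) + ((k:ℝ)^2/2) * ‖φ r / (r:ℂ)‖^2 := by ring
    rw [integral_neg, integral_add (hint5.const_mul _) (hint4.const_mul _),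
      integral_const_mul, integral_const_mul] at hmono
    exact hmono
  -- combine
  have hcomb : A + ((k:ℝ)^2 - 1/4) * B ≤ (1/(2*(k:ℝ)^2)) * W + ((k:ℝ)^2/2) * B := by
    have : A + ((k:ℝ)^2 - 1/4) * B = -E3 := by linarith [key1, key2.symm ▸ key1]
    linarith [key3, this]
  have h4 : A + ((k:ℝ)^2/2 - 1/4)*B ≤ 1/(2*(k:ℝ)^2)*W := by linarith [hcomb]
  have h6 : (k:ℝ)^2*B ≤ 4*(((k:ℝ)^2/2 - 1/4)*B) := by nlinarith [hBnn, hk2]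
  have h7 : 4*(1/(2*(k:ℝ)^2)*W) = 2*(((k:ℝ)^2)⁻¹)*W := by
    rw [one_div, mul_inv]; ring
  linarith [h4, h6, hAnn, h7]
end

section
/- Let k be an integer with |k| ≥ 1 and let φ : [1,R] → ℂ be C² with φ(1) = φ(R) = 0 and set ω = φ'' − ((k²−1/4)/r²)φ. Then ‖φ'‖²_{L²(1,R)} + k² ‖φ/r‖²_{L²(1,R)} ≤ C |k|^{-1} ‖r^{1/2} ω‖²_{L¹(1,R)} for an absolute constant C. -/
open MeasureTheory Set

private lemma ioo_eq_int {R : ℝ} (h : (1:ℝ) ≤ R) {E : Type*} [NormedAddCommGroup E]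
    [NormedSpace ℝ E] (f : ℝ → E) :
    ∫ x in Ioo (1:ℝ) R, f x = ∫ x in (1:ℝ)..R, f x := by
  rw [intervalIntegral.integral_of_le h, integral_Ioc_eq_integral_Ioo]

private lemma memL2 {R : ℝ} {f : ℝ → ℝ} (hf : ContinuousOn f (Icc 1 R)) :
    MemLp f (ENNReal.ofReal 2) (volume.restrict (Ioo (1:ℝ) R)) := by
  obtain ⟨C, hC⟩ := (isCompact_Icc : IsCompact (Icc (1:ℝ) R)).exists_bound_of_continuousOn hf
  exact MemLp.of_bound ((hf.mono Ioo_subset_Icc_self).aestronglyMeasurable measurableSet_Ioo) C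
    (by filter_upwards [ae_restrict_mem measurableSet_Ioo] with x hx
        using hC x (Ioo_subset_Icc_self hx))

private lemma cs2 {R : ℝ} (h : (1:ℝ) ≤ R) {f g : ℝ → ℝ}
    (hf : ContinuousOn f (Icc 1 R)) (hg : ContinuousOn g (Icc 1 R))
    (hf0 : ∀ x ∈ Icc (1:ℝ) R, 0 ≤ f x) (hg0 : ∀ x ∈ Icc (1:ℝ) R, 0 ≤ g x) :
    ∫ x in (1:ℝ)..R, f x * g x ≤
      Real.sqrt (∫ x in (1:ℝ)..R, f x ^ 2) * Real.sqrt (∫ x in (1:ℝ)..R, g x ^ 2) := by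
  rw [← ioo_eq_int h, ← ioo_eq_int h, ← ioo_eq_int h]
  have hpq : Real.HolderConjugate 2 2 := Real.HolderConjugate.two_two
  have h2 : ∀ x : ℝ, x ^ (2:ℝ) = x ^ 2 := fun x => by
    rw [show (2:ℝ) = ((2:ℕ):ℝ) by norm_num, Real.rpow_natCast]
  have hHolder := integral_mul_le_Lp_mul_Lq_of_nonneg (μ := volume.restrict (Ioo (1:ℝ) R)) hpq
    (f := f) (g := g)
    (by filter_upwards [ae_restrict_mem measurableSet_Ioo] with x hx
        using hf0 x (Ioo_subset_Icc_self hx))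
    (by filter_upwards [ae_restrict_mem measurableSet_Ioo] with x hx
        using hg0 x (Ioo_subset_Icc_self hx))
    (memL2 hf) (memL2 hg)
  calc ∫ x in Ioo (1:ℝ) R, f x * g x
      ≤ (∫ x in Ioo (1:ℝ) R, f x ^ (2:ℝ)) ^ ((1:ℝ)/2)
        * (∫ x in Ioo (1:ℝ) R, g x ^ (2:ℝ)) ^ ((1:ℝ)/2) := hHolder
    _ = Real.sqrt (∫ x in Ioo (1:ℝ) R, f x ^ 2) * Real.sqrt (∫ x in Ioo (1:ℝ) R, g x ^ 2) := by
        simp_rw [h2, Real.sqrt_eq_rpow]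

private lemma alg {X Y M s0 K a : ℝ} (hX0 : 0 ≤ X) (hY0 : 0 ≤ Y) (hM0 : 0 ≤ M)
    (hs00 : 0 ≤ s0) (hs0sq : s0^2 = 2*(X*Y)) (hK2 : 1 ≤ K^2) (ha1 : 1 ≤ a)
    (haK : a^2 = K^2) (key : X^2 + (K^2 - 1/4)*Y^2 ≤ s0*M) :
    X^2 + K^2*Y^2 ≤ 2 * a⁻¹ * M^2 := by
  have ha0 : (0:ℝ) < a := lt_of_lt_of_le one_pos ha1
  have hkY : (0:ℝ) ≤ K^2 * Y^2 := mul_nonneg (by linarith) (sq_nonneg Y)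
  have hQ0 : 0 ≤ X^2 + 3/4 * K^2 * Y^2 := by linarith [sq_nonneg X]
  have hQle : X^2 + 3/4 * K^2 * Y^2 ≤ s0 * M := by
    have hp : (0:ℝ) ≤ (K^2 - 1) * Y^2 := mul_nonneg (by linarith) (sq_nonneg Y)
    nlinarith [key]
  have haY : a^2 * Y^2 = K^2 * Y^2 := by rw [haK]
  have hs2 : a * s0^2 ≤ 4/3 * (X^2 + 3/4 * K^2 * Y^2) := by
    rw [hs0sq]
    nlinarith [sq_nonneg (X - a*Y), haY, sq_nonneg X]
  have hQM : a * (X^2 + 3/4 * K^2 * Y^2)^2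
      ≤ 4/3 * (X^2 + 3/4 * K^2 * Y^2) * M^2 := by
    calc a * (X^2 + 3/4 * K^2 * Y^2)^2 ≤ a * (s0*M)^2 :=
          mul_le_mul_of_nonneg_left (pow_le_pow_left₀ hQ0 hQle 2) ha0.le
      _ = (a * s0^2) * M^2 := by ring
      _ ≤ (4/3 * (X^2 + 3/4 * K^2 * Y^2)) * M^2 :=
          mul_le_mul_of_nonneg_right hs2 (sq_nonneg _)
      _ = 4/3 * (X^2 + 3/4 * K^2 * Y^2) * M^2 := by ring
  have hfin : a * (X^2 + K^2*Y^2) ≤ 2 * M^2 := by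
    rcases eq_or_lt_of_le hQ0 with h0 | h0
    · have hX0' : X^2 = 0 := le_antisymm (by linarith) (sq_nonneg X)
      have hY0' : K^2*Y^2 = 0 := le_antisymm (by linarith [sq_nonneg X]) hkY
      have hz : X^2 + K^2*Y^2 = 0 := by rw [hX0', hY0']; ring
      rw [hz, mul_zero]
      linarith [sq_nonneg M]
    · have hstep : (a * (X^2 + 3/4 * K^2 * Y^2)) * (X^2 + 3/4 * K^2 * Y^2)
          ≤ (4/3 * M^2) * (X^2 + 3/4 * K^2 * Y^2) := by
        calc (a * (X^2 + 3/4 * K^2 * Y^2)) * (X^2 + 3/4 * K^2 * Y^2)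
            = a * (X^2 + 3/4 * K^2 * Y^2)^2 := by ring
          _ ≤ 4/3 * (X^2 + 3/4 * K^2 * Y^2) * M^2 := hQM
          _ = (4/3 * M^2) * (X^2 + 3/4 * K^2 * Y^2) := by ring
      have haQ : a * (X^2 + 3/4 * K^2 * Y^2) ≤ 4/3 * M^2 :=
        (mul_le_mul_iff_left₀ h0).mp hstep
      have h43 : X^2 + K^2*Y^2 ≤ 4/3 * (X^2 + 3/4 * K^2 * Y^2) := by
        linarith [sq_nonneg X]
      have h5 : a * (X^2+K^2*Y^2) ≤ a * (4/3 * (X^2 + 3/4 * K^2 * Y^2)) :=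
        mul_le_mul_of_nonneg_left h43 ha0.le
      nlinarith [h5, haQ, sq_nonneg M]
  calc X^2 + K^2*Y^2 = a⁻¹ * (a * (X^2 + K^2*Y^2)) := by
        rw [← mul_assoc, inv_mul_cancel₀ (ne_of_gt ha0), one_mul]
    _ ≤ a⁻¹ * (2 * M^2) := mul_le_mul_of_nonneg_left hfin (inv_nonneg.mpr ha0.le)
    _ = 2 * a⁻¹ * M^2 := by ring

set_option maxHeartbeats 1000000 in
theorem stmt_5 :
    ∃ C > (0 : ℝ), ∀ (k : ℤ), 1 ≤ |k| → ∀ (R : ℝ), 1 < R →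
    ∀ (φ φ' φ'' ω : ℝ → ℂ),
    (∀ r ∈ Icc (1 : ℝ) R, HasDerivAt φ (φ' r) r) →
    (∀ r ∈ Icc (1 : ℝ) R, HasDerivAt φ' (φ'' r) r) →
    ContinuousOn φ'' (Icc (1 : ℝ) R) →
    φ 1 = 0 → φ R = 0 →
    (∀ r ∈ Icc (1 : ℝ) R,
      φ'' r - (((k : ℂ) ^ 2 - 1 / 4) / (r : ℂ) ^ 2) * φ r = ω r) →
    (∫ r in Ioo (1 : ℝ) R, ‖φ' r‖ ^ 2) +
      (k : ℝ) ^ 2 * ∫ r in Ioo (1 : ℝ) R, ‖φ r / (r : ℂ)‖ ^ 2 ≤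
      C * (|k| : ℝ)⁻¹ * (∫ r in Ioo (1 : ℝ) R, r ^ ((1 : ℝ) / 2) * ‖ω r‖) ^ 2 := by
  refine ⟨2, by norm_num, ?_⟩
  intro k hk R hR φ φ' φ'' ω hφ hφ' hφ''c h1 hRz hω
  have h1R : (1:ℝ) ≤ R := hR.le
  have hIcc : uIcc (1:ℝ) R = Icc 1 R := uIcc_of_le h1R
  have cφ : ContinuousOn φ (Icc 1 R) := fun r hr => (hφ r hr).continuousAt.continuousWithinAt
  have cφ' : ContinuousOn φ' (Icc 1 R) := fun r hr => (hφ' r hr).continuousAt.continuousWithinAt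
  have hrpos : ∀ r ∈ Icc (1:ℝ) R, (0:ℝ) < r := fun r hr => lt_of_lt_of_le one_pos hr.1
  have hrne : ∀ r ∈ Icc (1:ℝ) R, (r:ℂ) ≠ 0 := fun r hr =>
    Complex.ofReal_ne_zero.mpr (ne_of_gt (hrpos r hr))
  have intInt : ∀ {f : ℝ → ℂ}, ContinuousOn f (Icc 1 R) → IntervalIntegrable f volume 1 R :=
    fun hf => (by rwa [hIcc] : ContinuousOn _ (uIcc 1 R)).intervalIntegrable
  have intIntR : ∀ {f : ℝ → ℝ}, ContinuousOn f (Icc 1 R) → IntervalIntegrable f volume 1 R :=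
    fun hf => (by rwa [hIcc] : ContinuousOn _ (uIcc 1 R)).intervalIntegrable
  have cconjφ : ContinuousOn (fun t => (starRingEnd ℂ) (φ t)) (Icc 1 R) :=
    continuous_star.comp_continuousOn cφ
  have ccoef2 : ContinuousOn
      (fun x : ℝ => (((k:ℂ)^2 - 1/4) / (x:ℂ)^2) * ((starRingEnd ℂ) (φ x) * φ x)) (Icc 1 R) := by
    apply ContinuousOn.mul _ (cconjφ.mul cφ)
    apply ContinuousOn.div continuousOn_const
    · exact (Complex.continuous_ofReal.continuousOn).pow 2
    · exact fun r hr => pow_ne_zero 2 (hrne r hr)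
  have ccoefφ : ContinuousOn (fun r : ℝ => (((k:ℂ)^2 - 1/4) / (r:ℂ)^2) * φ r) (Icc 1 R) := by
    apply ContinuousOn.mul _ cφ
    apply ContinuousOn.div continuousOn_const
    · exact (Complex.continuous_ofReal.continuousOn).pow 2
    · exact fun r hr => pow_ne_zero 2 (hrne r hr)
  have cω : ContinuousOn ω (Icc 1 R) :=
    ContinuousOn.congr (hφ''c.sub ccoefφ) (fun r hr => (hω r hr).symm)
  have hψd : ∀ r ∈ Icc (1:ℝ) R,
      HasDerivAt (fun t => (starRingEnd ℂ) (φ t)) ((starRingEnd ℂ) (φ' r)) r :=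
    fun r hr => (hφ r hr).star
  have ibp := intervalIntegral.integral_mul_deriv_eq_deriv_mul
      (u := fun t => (starRingEnd ℂ) (φ t)) (v := φ')
      (u' := fun t => (starRingEnd ℂ) (φ' t)) (v' := φ'')
      (fun x hx => hψd x (hIcc ▸ hx)) (fun x hx => hφ' x (hIcc ▸ hx))
      (intInt (continuous_star.comp_continuousOn cφ')) (intInt hφ''c)
  simp only [h1, hRz, map_zero, zero_mul, sub_zero, zero_sub] at ibp
  have hsplit : ∫ x in (1:ℝ)..R, (starRingEnd ℂ) (φ x) * ω x
      = (∫ x in (1:ℝ)..R, (starRingEnd ℂ) (φ x) * φ'' x)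
        - ∫ x in (1:ℝ)..R, (((k:ℂ)^2 - 1/4) / (x:ℂ)^2) * ((starRingEnd ℂ) (φ x) * φ x) := by
    rw [← intervalIntegral.integral_sub (intInt (f := fun x => (starRingEnd ℂ) (φ x) * φ'' x) (cconjφ.mul hφ''c)) (intInt ccoef2)]
    apply intervalIntegral.integral_congr
    intro x hx
    have hx' : x ∈ Icc (1:ℝ) R := hIcc ▸ hx
    show (starRingEnd ℂ) (φ x) * ω x
      = (starRingEnd ℂ) (φ x) * φ'' x
        - (((k:ℂ)^2 - 1/4) / (x:ℂ)^2) * ((starRingEnd ℂ) (φ x) * φ x)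
    rw [← hω x hx']; ring
  have conj_mul_self : ∀ z : ℂ, (starRingEnd ℂ) z * z = ((‖z‖^2 : ℝ) : ℂ) := fun z => by
    rw [mul_comm, Complex.mul_conj, Complex.normSq_eq_norm_sq]
  have e1 : ∫ x in (1:ℝ)..R, (starRingEnd ℂ) (φ' x) * φ' x
      = ((∫ x in (1:ℝ)..R, ‖φ' x‖^2 : ℝ) : ℂ) := by
    rw [← intervalIntegral.integral_ofReal]
    exact intervalIntegral.integral_congr (fun x _ => conj_mul_self (φ' x))
  have e2 : ∫ x in (1:ℝ)..R, (((k:ℂ)^2 - 1/4) / (x:ℂ)^2) * ((starRingEnd ℂ) (φ x) * φ x)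
      = ((((k:ℝ)^2 - 1/4) * ∫ x in (1:ℝ)..R, ‖φ x / (x:ℂ)‖^2 : ℝ) : ℂ) := by
    rw [← intervalIntegral.integral_const_mul, ← intervalIntegral.integral_ofReal]
    apply intervalIntegral.integral_congr
    intro x hx
    have hx' : x ∈ Icc (1:ℝ) R := hIcc ▸ hx
    have hxne' : (x:ℝ) ≠ 0 := ne_of_gt (hrpos x hx')
    show (((k:ℂ)^2 - 1/4) / (x:ℂ)^2) * ((starRingEnd ℂ) (φ x) * φ x)
      = ((((k:ℝ)^2 - 1/4) * ‖φ x / (x:ℂ)‖^2 : ℝ) : ℂ)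
    rw [conj_mul_self (φ x)]
    have hn : ‖φ x / (x:ℂ)‖^2 = ‖φ x‖^2 / x^2 := by
      rw [norm_div, div_pow, Complex.norm_real, Real.norm_eq_abs, sq_abs]
    rw [hn]
    push_cast
    ring
  have hre : (∫ x in (1:ℝ)..R, ‖φ' x‖^2)
      + ((k:ℝ)^2 - 1/4) * (∫ x in (1:ℝ)..R, ‖φ x / (x:ℂ)‖^2)
      = (-(∫ x in (1:ℝ)..R, (starRingEnd ℂ) (φ x) * ω x)).re := by
    rw [hsplit, ibp, e1, e2]
    simp only [Complex.neg_re, Complex.sub_re, Complex.ofReal_re]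
    ring
  have key1 : (∫ x in (1:ℝ)..R, ‖φ' x‖^2)
      + ((k:ℝ)^2 - 1/4) * (∫ x in (1:ℝ)..R, ‖φ x / (x:ℂ)‖^2)
      ≤ ∫ x in (1:ℝ)..R, ‖φ x‖ * ‖ω x‖ := by
    rw [hre]
    calc (-(∫ x in (1:ℝ)..R, (starRingEnd ℂ) (φ x) * ω x)).re
        ≤ ‖∫ x in (1:ℝ)..R, (starRingEnd ℂ) (φ x) * ω x‖ := by
          rw [Complex.neg_re]
          calc -(∫ x in (1:ℝ)..R, (starRingEnd ℂ) (φ x) * ω x).re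
              ≤ |(∫ x in (1:ℝ)..R, (starRingEnd ℂ) (φ x) * ω x).re| := neg_le_abs _
            _ ≤ ‖(∫ x in (1:ℝ)..R, (starRingEnd ℂ) (φ x) * ω x)‖ :=
                Complex.abs_re_le_norm _
            _ = ‖∫ x in (1:ℝ)..R, (starRingEnd ℂ) (φ x) * ω x‖ :=
                rfl
      _ ≤ ∫ x in (1:ℝ)..R, ‖(starRingEnd ℂ) (φ x) * ω x‖ :=
          intervalIntegral.norm_integral_le_integral_norm h1R
      _ = ∫ x in (1:ℝ)..R, ‖φ x‖ * ‖ω x‖ := by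
          apply intervalIntegral.integral_congr
          intro x _
          simp [norm_mul, RCLike.norm_conj]
  -- real quantities
  set A : ℝ := ∫ x in (1:ℝ)..R, ‖φ' x‖^2 with hA
  set B : ℝ := ∫ x in (1:ℝ)..R, ‖φ x / (x:ℂ)‖^2 with hB
  set M : ℝ := ∫ x in (1:ℝ)..R, x ^ ((1:ℝ)/2) * ‖ω x‖ with hM
  have hA0 : 0 ≤ A := intervalIntegral.integral_nonneg h1R (fun x _ => sq_nonneg _)
  have hB0 : 0 ≤ B := intervalIntegral.integral_nonneg h1R (fun x _ => sq_nonneg _)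
  have hM0 : 0 ≤ M := intervalIntegral.integral_nonneg h1R
    (fun x hx => mul_nonneg (Real.rpow_nonneg (by linarith [hx.1]) _) (norm_nonneg _))
  set X : ℝ := Real.sqrt A with hX
  set Y : ℝ := Real.sqrt B with hY
  have hXsq : X^2 = A := Real.sq_sqrt hA0
  have hYsq : Y^2 = B := Real.sq_sqrt hB0
  have hX0 : 0 ≤ X := Real.sqrt_nonneg _
  have hY0 : 0 ≤ Y := Real.sqrt_nonneg _
  -- G and Cauchy-Schwarz
  have cFn : ContinuousOn (fun s => ‖φ' s‖) (Icc 1 R) := cφ'.norm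
  have cGn : ContinuousOn (fun s : ℝ => ‖φ s‖ / s) (Icc 1 R) :=
    (cφ.norm.div continuousOn_id (fun r hr => ne_of_gt (hrpos r hr)))
  have hGeq : ∀ x ∈ Icc (1:ℝ) R, ‖φ x / (x:ℂ)‖ = ‖φ x‖ / x := by
    intro x hx
    rw [norm_div, Complex.norm_real, Real.norm_eq_abs, abs_of_pos (hrpos x hx)]
  have hBG : B = ∫ x in (1:ℝ)..R, (‖φ x‖ / x)^2 := by
    rw [hB]
    apply intervalIntegral.integral_congr
    intro x hx
    have hx' : x ∈ Icc (1:ℝ) R := hIcc ▸ hx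
    simp [hGeq x hx', abs_of_pos (hrpos x hx')]
  have hCS : ∫ x in (1:ℝ)..R, ‖φ' x‖ * (‖φ x‖ / x) ≤ X * Y := by
    have := cs2 h1R cFn cGn (fun x _ => norm_nonneg _)
      (fun x hx => div_nonneg (norm_nonneg _) (hrpos x hx).le)
    rw [← hBG] at this
    exact this
  have hXY0 : 0 ≤ X * Y := mul_nonneg hX0 hY0
  have cFG : ContinuousOn (fun s : ℝ => ‖φ' s‖ * (‖φ s‖ / s)) (Icc 1 R) := cFn.mul cGn
  -- pointwise bound
  have hpt : ∀ r ∈ Icc (1:ℝ) R, ‖φ r‖^2 ≤ 2 * r * (X * Y) := by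
    intro r hr
    have hsub : uIcc (1:ℝ) r = Icc 1 r := uIcc_of_le hr.1
    have hsubset : Icc (1:ℝ) r ⊆ Icc 1 R := Icc_subset_Icc le_rfl hr.2
    set d : ℝ → ℝ := fun s => (φ' s * (starRingEnd ℂ) (φ s) + φ s * (starRingEnd ℂ) (φ' s)).re
      with hd_def
    have hd : ∀ s ∈ Icc (1:ℝ) r,
        HasDerivAt (fun t => (φ t * (starRingEnd ℂ) (φ t)).re) (d s) s := by
      intro s hs
      have hs' := hsubset hs
      have hmul : HasDerivAt (fun t => φ t * (starRingEnd ℂ) (φ t))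
          (φ' s * (starRingEnd ℂ) (φ s) + φ s * (starRingEnd ℂ) (φ' s)) s :=
        (hφ s hs').mul ((hφ s hs').star)
      exact (Complex.reCLM.hasFDerivAt.comp_hasDerivAt s hmul)
    have cd : ContinuousOn d (Icc 1 R) := by
      apply Complex.continuous_re.comp_continuousOn
      exact (cφ'.mul cconjφ).add (cφ.mul (continuous_star.comp_continuousOn cφ'))
    have hdint : IntervalIntegrable d volume 1 r :=
      (by rw [hsub]; exact cd.mono hsubset : ContinuousOn d (uIcc 1 r)).intervalIntegrable
    have hftc := intervalIntegral.integral_eq_sub_of_hasDerivAt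
      (f := fun t => (φ t * (starRingEnd ℂ) (φ t)).re) (f' := d)
      (fun s hs => hd s (hsub ▸ hs)) hdint
    have hn1 : (φ 1 * (starRingEnd ℂ) (φ 1)).re = 0 := by rw [h1]; simp
    have hnr : (φ r * (starRingEnd ℂ) (φ r)).re = ‖φ r‖^2 := by
      rw [mul_comm, conj_mul_self]; exact Complex.ofReal_re _
    simp only [hn1, hnr, sub_zero] at hftc
    rw [← hftc]
    have hFGint_r : IntervalIntegrable (fun s : ℝ => ‖φ' s‖ * (‖φ s‖ / s)) volume 1 r :=
      (by rw [hsub]; exact cFG.mono hsubset :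
        ContinuousOn (fun s : ℝ => ‖φ' s‖ * (‖φ s‖ / s)) (uIcc 1 r)).intervalIntegrable
    have hmono : ∫ s in (1:ℝ)..r, d s
        ≤ ∫ s in (1:ℝ)..r, 2 * r * (‖φ' s‖ * (‖φ s‖ / s)) := by
      apply intervalIntegral.integral_mono_on hr.1 hdint (hFGint_r.const_mul (2*r))
      intro s hs
      have hspos : (0:ℝ) < s := lt_of_lt_of_le one_pos hs.1
      have hzre : d s ≤ 2 * (‖φ' s‖ * ‖φ s‖) := by
        rw [hd_def]
        calc (φ' s * (starRingEnd ℂ) (φ s) + φ s * (starRingEnd ℂ) (φ' s)).re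
            ≤ ‖φ' s * (starRingEnd ℂ) (φ s) + φ s * (starRingEnd ℂ) (φ' s)‖ := by
              exact Complex.re_le_norm _
          _ ≤ ‖φ' s * (starRingEnd ℂ) (φ s)‖ + ‖φ s * (starRingEnd ℂ) (φ' s)‖ := norm_add_le _ _
          _ = 2 * (‖φ' s‖ * ‖φ s‖) := by
              simp [norm_mul, RCLike.norm_conj]; ring
      have heqs : 2 * (‖φ' s‖ * ‖φ s‖) = 2 * s * (‖φ' s‖ * (‖φ s‖ / s)) := by
        field_simp
      have hle2 : 2 * s * (‖φ' s‖ * (‖φ s‖ / s)) ≤ 2 * r * (‖φ' s‖ * (‖φ s‖ / s)) := by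
        have ht0 : 0 ≤ ‖φ' s‖ * (‖φ s‖ / s) :=
          mul_nonneg (norm_nonneg _) (div_nonneg (norm_nonneg _) hspos.le)
        nlinarith [hs.2]
      linarith [hzre, hle2, heqs.le, heqs.ge]
    refine hmono.trans ?_
    rw [intervalIntegral.integral_const_mul]
    have h2 : ∫ s in (1:ℝ)..r, ‖φ' s‖ * (‖φ s‖ / s)
        ≤ ∫ s in (1:ℝ)..R, ‖φ' s‖ * (‖φ s‖ / s) := by
      apply intervalIntegral.integral_mono_interval le_rfl hr.1 hr.2
      · filter_upwards [ae_restrict_mem measurableSet_Ioc] with x hx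
        exact mul_nonneg (norm_nonneg _)
          (div_nonneg (norm_nonneg _) (by linarith [hx.1] : (0:ℝ) ≤ x))
      · exact intIntR cFG
    have h2r : (0:ℝ) ≤ 2 * r := by linarith [hr.1]
    exact mul_le_mul_of_nonneg_left (h2.trans hCS) h2r
  -- step C
  set s0 := Real.sqrt (2*(X*Y)) with hs0def
  have hs00 : 0 ≤ s0 := Real.sqrt_nonneg _
  have hs0sq : s0^2 = 2*(X*Y) := Real.sq_sqrt (by positivity)
  have crpow : ContinuousOn (fun x : ℝ => x ^ ((1:ℝ)/2)) (Icc 1 R) := fun x hx =>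
    (Real.continuousAt_rpow_const x _ (Or.inr (by norm_num))).continuousWithinAt
  have hstepC : ∫ x in (1:ℝ)..R, ‖φ x‖ * ‖ω x‖ ≤ s0 * M := by
    have hmono2 : ∫ x in (1:ℝ)..R, ‖φ x‖ * ‖ω x‖
        ≤ ∫ x in (1:ℝ)..R, s0 * (x ^ ((1:ℝ)/2) * ‖ω x‖) := by
      apply intervalIntegral.integral_mono_on h1R (intIntR (cφ.norm.mul cω.norm))
        ((intIntR (crpow.mul cω.norm)).const_mul s0)
      intro x hx
      have hxpos := hrpos x hx
      have hφx : ‖φ x‖ ≤ Real.sqrt x * s0 := by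
        have h2 : ‖φ x‖^2 ≤ x * (2*(X*Y)) := by nlinarith [hpt x hx]
        calc ‖φ x‖ ≤ Real.sqrt (x * (2*(X*Y))) :=
              (Real.le_sqrt (norm_nonneg _) (by positivity)).mpr h2
          _ = Real.sqrt x * s0 := Real.sqrt_mul hxpos.le _
      calc ‖φ x‖ * ‖ω x‖ ≤ (Real.sqrt x * s0) * ‖ω x‖ :=
            mul_le_mul_of_nonneg_right hφx (norm_nonneg _)
        _ = s0 * (x ^ ((1:ℝ)/2) * ‖ω x‖) := by rw [Real.sqrt_eq_rpow]; ring
    rw [intervalIntegral.integral_const_mul] at hmono2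
    exact hmono2
  have key : X^2 + ((k:ℝ)^2 - 1/4) * Y^2 ≤ s0 * M := by
    rw [hXsq, hYsq]; exact key1.trans hstepC
  -- final algebra
  have hKabs : (1:ℝ) ≤ |(k:ℝ)| := by
    have : ((1:ℤ):ℝ) ≤ ((|k|:ℤ):ℝ) := Int.cast_le.mpr hk
    rwa [Int.cast_one, Int.cast_abs] at this
  have hK2 : (1:ℝ) ≤ (k:ℝ)^2 := by rw [← sq_abs]; exact one_le_pow₀ hKabs
  rw [ioo_eq_int h1R, ioo_eq_int h1R, ioo_eq_int h1R, ← hA, ← hB, ← hM,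
    ← hXsq, ← hYsq]
  exact alg hX0 hY0 hM0 hs00 hs0sq hK2 hKabs (sq_abs _) key
end

section
/- Let φ : [1,R] → ℂ be C² with φ(1) = φ(R) = 0 and satisfy φ'' + r^{-1}φ' = ω. Then for all r ∈ [1,R], r φ'(r) = ∫₁^r s ω(s) ds + φ'(1), and consequently ‖∂_r φ‖_{L^∞(1,R)} ≤ C (R/(R−1))^{1/2} (1 + log R) ‖r^{3/2} ω‖_{L²(1,R)} for an absolute constant C. -/
open MeasureTheory Set intervalIntegral

lemma my_cs {a b : ℝ} (hab : a ≤ b) {f g : ℝ → ℝ}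
    (hf : ContinuousOn f (Icc a b)) (hg : ContinuousOn g (Icc a b))
    (hf0 : ∀ x ∈ Icc a b, 0 ≤ f x) (hg0 : ∀ x ∈ Icc a b, 0 ≤ g x) :
    ∫ x in a..b, f x * g x ≤
      Real.sqrt (∫ x in a..b, f x ^ 2) * Real.sqrt (∫ x in a..b, g x ^ 2) := by
  have hmeas : MeasurableSet (Ioc a b) := measurableSet_Ioc
  have hsub : Ioc a b ⊆ Icc a b := Ioc_subset_Icc_self
  have hfm : AEStronglyMeasurable f (volume.restrict (Ioc a b)) :=
    (hf.mono hsub).aestronglyMeasurable hmeas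
  have hgm : AEStronglyMeasurable g (volume.restrict (Ioc a b)) :=
    (hg.mono hsub).aestronglyMeasurable hmeas
  have hf2i : IntegrableOn (fun x => f x ^ 2) (Ioc a b) :=
    ((hf.pow 2).integrableOn_compact isCompact_Icc).mono_set hsub
  have hg2i : IntegrableOn (fun x => g x ^ 2) (Ioc a b) :=
    ((hg.pow 2).integrableOn_compact isCompact_Icc).mono_set hsub
  have hfL : MemLp f (ENNReal.ofReal 2) (volume.restrict (Ioc a b)) := by
    rw [show ENNReal.ofReal 2 = 2 by norm_num]
    exact (memLp_two_iff_integrable_sq hfm).2 hf2i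
  have hgL : MemLp g (ENNReal.ofReal 2) (volume.restrict (Ioc a b)) := by
    rw [show ENNReal.ofReal 2 = 2 by norm_num]
    exact (memLp_two_iff_integrable_sq hgm).2 hg2i
  have hconj : (2 : ℝ).HolderConjugate 2 := ⟨by norm_num, by norm_num, by norm_num⟩
  have key := integral_mul_le_Lp_mul_Lq_of_nonneg hconj
    (μ := volume.restrict (Ioc a b))
    (ae_restrict_of_forall_mem hmeas fun x hx => hf0 x (hsub hx))
    (ae_restrict_of_forall_mem hmeas fun x hx => hg0 x (hsub hx))
    hfL hgL
  rw [intervalIntegral.integral_of_le hab, intervalIntegral.integral_of_le hab,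
    intervalIntegral.integral_of_le hab]
  calc ∫ x in Ioc a b, f x * g x
      ≤ (∫ x in Ioc a b, f x ^ (2:ℝ)) ^ (1/(2:ℝ)) * (∫ x in Ioc a b, g x ^ (2:ℝ)) ^ (1/(2:ℝ)) := key
    _ = Real.sqrt (∫ x in Ioc a b, f x ^ 2) * Real.sqrt (∫ x in Ioc a b, g x ^ 2) := by
        rw [← Real.sqrt_eq_rpow, ← Real.sqrt_eq_rpow]
        congr 2 <;> refine setIntegral_congr_fun measurableSet_Ioc fun x _ => ?_ <;>
          rw [show (2:ℝ) = ((2:ℕ):ℝ) by norm_num, Real.rpow_natCast]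

theorem stmt_18 :
    ∃ C > (0 : ℝ), ∀ (R : ℝ), 1 < R → ∀ (φ φ' φ'' ω : ℝ → ℂ),
    (∀ r ∈ Icc (1 : ℝ) R, HasDerivAt φ (φ' r) r) →
    (∀ r ∈ Icc (1 : ℝ) R, HasDerivAt φ' (φ'' r) r) →
    ContinuousOn φ'' (Icc (1 : ℝ) R) →
    φ 1 = 0 → φ R = 0 →
    (∀ r ∈ Icc (1 : ℝ) R, φ'' r + ((r : ℂ))⁻¹ * φ' r = ω r) →
    (∀ r ∈ Icc (1 : ℝ) R,
      (r : ℂ) * φ' r = (∫ s in (1 : ℝ)..r, (s : ℂ) * ω s) + φ' 1) ∧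
    (∀ r ∈ Icc (1 : ℝ) R,
      ‖φ' r‖ ≤ C * Real.sqrt (R / (R - 1)) * (1 + Real.log R) *
        Real.sqrt (∫ s in Ioo (1 : ℝ) R, s ^ 3 * ‖ω s‖ ^ 2)) := by
  refine ⟨2, by norm_num, ?_⟩
  intro R hR φ φ' φ'' ω hφ hφ' hφ''c h1v hRv hode
  have hR0 : (0:ℝ) < R := lt_trans one_pos hR
  have hlogR : 0 < Real.log R := Real.log_pos hR
  have huRI : uIcc (1:ℝ) R = Icc 1 R := uIcc_of_le hR.le
  -- continuity facts
  have hφ'c : ContinuousOn φ' (Icc 1 R) := fun r hr =>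
    (hφ' r hr).continuousAt.continuousWithinAt
  have hinvc : ContinuousOn (fun r : ℝ => ((r:ℂ))⁻¹) (Icc 1 R) :=
    Complex.continuous_ofReal.continuousOn.inv₀
      (fun r hr => Complex.ofReal_ne_zero.mpr (by have := hr.1; positivity))
  have hωc : ContinuousOn ω (Icc 1 R) :=
    (hφ''c.add (hinvc.mul hφ'c)).congr fun r hr => (hode r hr).symm
  have hsωc : ContinuousOn (fun s : ℝ => (s:ℂ) * ω s) (Icc 1 R) :=
    Complex.continuous_ofReal.continuousOn.mul hωc
  set F : ℝ → ℂ := fun r => ∫ s in (1:ℝ)..r, (s:ℂ) * ω s with hFdef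
  -- Part 1
  have key1 : ∀ r ∈ Icc (1:ℝ) R, (r:ℂ) * φ' r = F r + φ' 1 := by
    intro r hr
    have hsub : Icc (1:ℝ) r ⊆ Icc 1 R := Icc_subset_Icc le_rfl hr.2
    have huIcc : uIcc (1:ℝ) r = Icc 1 r := uIcc_of_le hr.1
    have hderiv : ∀ t ∈ uIcc (1:ℝ) r,
        HasDerivAt (fun u : ℝ => (u:ℂ) * φ' u) ((t:ℂ) * ω t) t := by
      intro t ht
      have htm : t ∈ Icc (1:ℝ) R := hsub (huIcc ▸ ht)
      have h1d : HasDerivAt (fun u : ℝ => (u:ℂ)) 1 t := by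
        simpa using (hasDerivAt_id t).ofReal_comp
      have hmul := h1d.mul (hφ' t htm)
      refine HasDerivAt.congr_deriv hmul ?_
      have ht0 : (t:ℂ) ≠ 0 := Complex.ofReal_ne_zero.mpr (by have := htm.1; positivity)
      rw [← hode t htm]
      field_simp
      ring
    have hint : IntervalIntegrable (fun s : ℝ => (s:ℂ) * ω s) volume 1 r :=
      (hsωc.mono (by rw [huIcc]; exact hsub)).intervalIntegrable
    have heq := intervalIntegral.integral_eq_sub_of_hasDerivAt hderiv hint
    simp only [hFdef]
    rw [heq]
    push_cast
    ring
  refine ⟨fun r hr => key1 r hr, ?_⟩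
  -- Part 2
  set I := ∫ s in Ioo (1:ℝ) R, s^3 * ‖ω s‖^2 with hIdef
  have hI0 : 0 ≤ I := setIntegral_nonneg measurableSet_Ioo fun s hs => by
    have := hs.1; positivity
  set M := Real.sqrt I with hMdef
  have hM0 : 0 ≤ M := Real.sqrt_nonneg _
  have hwc : ContinuousOn (fun s : ℝ => s^3 * ‖ω s‖^2) (Icc 1 R) :=
    (continuous_pow 3).continuousOn.mul (hωc.norm.pow 2)
  -- bound on F
  have hFbound : ∀ r ∈ Icc (1:ℝ) R, ‖F r‖ ≤ Real.sqrt (Real.log R) * M := by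
    intro r hr
    have hr1 : (1:ℝ) ≤ r := hr.1
    have hsub : Icc (1:ℝ) r ⊆ Icc 1 R := Icc_subset_Icc le_rfl hr.2
    have huIcc : uIcc (1:ℝ) r = Icc 1 r := uIcc_of_le hr1
    have step1 : ‖F r‖ ≤ ∫ s in (1:ℝ)..r, ‖(s:ℂ) * ω s‖ :=
      intervalIntegral.norm_integral_le_integral_norm hr1
    have step2 : (∫ s in (1:ℝ)..r, ‖(s:ℂ) * ω s‖)
        = ∫ s in (1:ℝ)..r, Real.sqrt s⁻¹ * (Real.sqrt (s^3) * ‖ω s‖) := by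
      apply intervalIntegral.integral_congr
      intro s hs
      have hs1 : 1 ≤ s := (huIcc ▸ hs).1
      have hs0 : 0 < s := by linarith
      show ‖(s:ℂ) * ω s‖ = Real.sqrt s⁻¹ * (Real.sqrt (s^3) * ‖ω s‖)
      have : Real.sqrt s⁻¹ * Real.sqrt (s^3) = s := by
        rw [← Real.sqrt_mul (by positivity)]
        rw [show s⁻¹ * s^3 = s^2 by field_simp]
        exact Real.sqrt_sq hs0.le
      rw [norm_mul, Complex.norm_real, Real.norm_eq_abs, abs_of_pos hs0, ← mul_assoc, this]
    have hcs := my_cs hr1 (f := fun s => Real.sqrt s⁻¹)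
      (g := fun s => Real.sqrt (s^3) * ‖ω s‖)
      (Real.continuous_sqrt.comp_continuousOn
        (continuousOn_id.inv₀ fun x hx => by have := hx.1; positivity))
      ((Real.continuous_sqrt.comp (continuous_pow 3)).continuousOn.mul
        ((hωc.mono hsub).norm))
      (fun x _ => Real.sqrt_nonneg _)
      (fun x _ => mul_nonneg (Real.sqrt_nonneg _) (norm_nonneg _))
    have ef : (∫ x in (1:ℝ)..r, (Real.sqrt x⁻¹)^2) = Real.log r := by
      rw [show (∫ x in (1:ℝ)..r, (Real.sqrt x⁻¹)^2) = ∫ x in (1:ℝ)..r, x⁻¹ from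
        intervalIntegral.integral_congr fun x hx => by
          have hx1 : 1 ≤ x := (huIcc ▸ hx).1
          show (Real.sqrt x⁻¹)^2 = x⁻¹
          exact Real.sq_sqrt (inv_nonneg.mpr (by linarith))]
      rw [integral_inv (by rw [huIcc]; rintro ⟨h, _⟩; linarith), div_one]
    have eg : (∫ x in (1:ℝ)..r, (Real.sqrt (x^3) * ‖ω x‖)^2)
        = ∫ x in (1:ℝ)..r, x^3 * ‖ω x‖^2 := by
      apply intervalIntegral.integral_congr
      intro x hx
      have hx1 : 1 ≤ x := (huIcc ▸ hx).1
      show (Real.sqrt (x^3) * ‖ω x‖)^2 = x^3 * ‖ω x‖^2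
      rw [mul_pow, Real.sq_sqrt (pow_nonneg (by linarith) 3)]
    have hint1 : IntervalIntegrable (fun s : ℝ => s^3 * ‖ω s‖^2) volume 1 r :=
      (hwc.mono (by rw [huIcc]; exact hsub)).intervalIntegrable
    have hint2 : IntervalIntegrable (fun s : ℝ => s^3 * ‖ω s‖^2) volume r R :=
      (hwc.mono (by rw [uIcc_of_le hr.2]; exact Icc_subset_Icc hr1 le_rfl)).intervalIntegrable
    have egle : (∫ x in (1:ℝ)..r, x^3 * ‖ω x‖^2) ≤ I := by
      have hsplit := intervalIntegral.integral_add_adjacent_intervals hint1 hint2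
      have htail : 0 ≤ ∫ x in r..R, x^3 * ‖ω x‖^2 :=
        intervalIntegral.integral_nonneg hr.2 fun x hx => by
          have h0 : (0:ℝ) < x := lt_of_lt_of_le (by linarith : (0:ℝ) < r) hx.1
          positivity
      have htot : (∫ x in (1:ℝ)..r, x^3 * ‖ω x‖^2) + (∫ x in r..R, x^3 * ‖ω x‖^2) = I := by
        rw [hsplit, intervalIntegral.integral_of_le hR.le, integral_Ioc_eq_integral_Ioo]
      linarith
    calc ‖F r‖ ≤ ∫ s in (1:ℝ)..r, Real.sqrt s⁻¹ * (Real.sqrt (s^3) * ‖ω s‖) :=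
        step2 ▸ step1
      _ ≤ Real.sqrt (∫ x in (1:ℝ)..r, (Real.sqrt x⁻¹)^2) *
          Real.sqrt (∫ x in (1:ℝ)..r, (Real.sqrt (x^3) * ‖ω x‖)^2) := hcs
      _ ≤ Real.sqrt (Real.log R) * M := by
          rw [ef, eg]
          apply mul_le_mul
          · exact Real.sqrt_le_sqrt (Real.log_le_log (by linarith) hr.2)
          · exact Real.sqrt_le_sqrt egle
          · exact Real.sqrt_nonneg _
          · exact Real.sqrt_nonneg _
  -- F is continuous
  have hFcont : ContinuousOn F (Icc 1 R) := by
    have := intervalIntegral.continuousOn_primitive_interval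
      (f := fun s : ℝ => (s:ℂ) * ω s) (a := 1) (b := R) (μ := volume)
      (by rw [huRI]; exact hsωc.integrableOn_Icc)
    rwa [huRI] at this
  -- integral of φ' vanishes
  have hφint : (∫ r in (1:ℝ)..R, φ' r) = 0 := by
    have heq := intervalIntegral.integral_eq_sub_of_hasDerivAt
      (fun t ht => hφ t (huRI ▸ ht))
      ((hφ'c.mono (by rw [huRI])).intervalIntegrable)
    rw [heq, hRv, h1v, sub_zero]
  -- the split formula
  have hsplit : ∀ r ∈ Icc (1:ℝ) R, φ' r = ((r:ℂ))⁻¹ * (F r + φ' 1) := by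
    intro r hr
    have hr0 : (r:ℂ) ≠ 0 := Complex.ofReal_ne_zero.mpr (by have := hr.1; positivity)
    rw [← key1 r hr, ← mul_assoc, inv_mul_cancel₀ hr0, one_mul]
  -- compute the integral identity for φ' 1
  have hloginv : (∫ r in (1:ℝ)..R, ((r:ℂ))⁻¹) = (Real.log R : ℂ) := by
    rw [show (fun r : ℝ => ((r:ℂ))⁻¹) = fun r : ℝ => ((r⁻¹ : ℝ) : ℂ) from
      funext fun r => (Complex.ofReal_inv r).symm]
    rw [intervalIntegral.integral_ofReal,
      integral_inv (by rw [huRI]; rintro ⟨h, _⟩; linarith), div_one]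
  have hintinvF : IntervalIntegrable (fun r : ℝ => ((r:ℂ))⁻¹ * F r) volume 1 R :=
    ((hinvc.mul hFcont).mono (by rw [huRI])).intervalIntegrable
  have hintinvc : IntervalIntegrable (fun r : ℝ => ((r:ℂ))⁻¹ * φ' 1) volume 1 R :=
    ((hinvc.mul continuousOn_const).mono (by rw [huRI])).intervalIntegrable
  have hceq : (Real.log R : ℂ) * φ' 1 = - ∫ r in (1:ℝ)..R, ((r:ℂ))⁻¹ * F r := by
    have e1 : (∫ r in (1:ℝ)..R, φ' r)
        = (∫ r in (1:ℝ)..R, ((r:ℂ))⁻¹ * F r) + ∫ r in (1:ℝ)..R, ((r:ℂ))⁻¹ * φ' 1 := by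
      rw [← intervalIntegral.integral_add hintinvF hintinvc]
      apply intervalIntegral.integral_congr
      intro r hrm
      have hr : r ∈ Icc (1:ℝ) R := huRI ▸ hrm
      rw [hsplit r hr, mul_add]
    have e2 : (∫ r in (1:ℝ)..R, ((r:ℂ))⁻¹ * φ' 1)
        = (Real.log R : ℂ) * φ' 1 := by
      rw [intervalIntegral.integral_mul_const, hloginv]
    rw [e1, e2] at hφint
    linear_combination hφint
  -- bound on φ' 1
  have hc : ‖φ' 1‖ ≤ Real.sqrt (Real.log R) * M := by
    have hAbound : ‖∫ r in (1:ℝ)..R, ((r:ℂ))⁻¹ * F r‖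
        ≤ Real.log R * (Real.sqrt (Real.log R) * M) := by
      calc ‖∫ r in (1:ℝ)..R, ((r:ℂ))⁻¹ * F r‖
          ≤ ∫ r in (1:ℝ)..R, ‖((r:ℂ))⁻¹ * F r‖ :=
            intervalIntegral.norm_integral_le_integral_norm hR.le
        _ ≤ ∫ r in (1:ℝ)..R, r⁻¹ * (Real.sqrt (Real.log R) * M) := by
            have hrinv : ContinuousOn (fun x : ℝ => x⁻¹ * (Real.sqrt (Real.log R) * M))
                (Icc 1 R) :=
              (continuousOn_id.inv₀ fun x hx => by
                have h1 : (1:ℝ) ≤ x := hx.1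
                simp only [id]; intro h; rw [h] at h1; linarith).mul continuousOn_const
            apply intervalIntegral.integral_mono_on hR.le hintinvF.norm
              ((hrinv.mono (by rw [huRI])).intervalIntegrable)
            intro r hr
            have hr0 : (0:ℝ) < r := by have := hr.1; positivity
            rw [norm_mul, norm_inv, Complex.norm_real, Real.norm_eq_abs, abs_of_pos hr0]
            exact mul_le_mul_of_nonneg_left (hFbound r hr) (by positivity)
        _ = (∫ r in (1:ℝ)..R, r⁻¹) * (Real.sqrt (Real.log R) * M) :=
            intervalIntegral.integral_mul_const _ _
        _ = Real.log R * (Real.sqrt (Real.log R) * M) := by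
            rw [integral_inv (by rw [huRI]; rintro ⟨h, _⟩; linarith), div_one]
    have : Real.log R * ‖φ' 1‖ ≤ Real.log R * (Real.sqrt (Real.log R) * M) := by
      have e : Real.log R * ‖φ' 1‖ = ‖(Real.log R : ℂ) * φ' 1‖ := by
        rw [norm_mul, Complex.norm_real, Real.norm_eq_abs, abs_of_pos hlogR]
      rw [e, hceq, norm_neg]
      exact hAbound
    exact le_of_mul_le_mul_left this hlogR
  -- conclusion
  intro r hr
  have hr0 : (0:ℝ) < r := by have := hr.1; positivity
  have hstep : ‖φ' r‖ ≤ 2 * (Real.sqrt (Real.log R) * M) := by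
    rw [hsplit r hr, norm_mul, norm_inv, Complex.norm_real, Real.norm_eq_abs,
      abs_of_pos hr0]
    have hinv1 : r⁻¹ ≤ 1 := by
      rw [inv_le_one_iff₀]; right; exact hr.1
    calc r⁻¹ * ‖F r + φ' 1‖ ≤ 1 * ‖F r + φ' 1‖ :=
        mul_le_mul_of_nonneg_right hinv1 (norm_nonneg _)
      _ = ‖F r + φ' 1‖ := one_mul _
      _ ≤ ‖F r‖ + ‖φ' 1‖ := norm_add_le _ _
      _ ≤ 2 * (Real.sqrt (Real.log R) * M) := by
          have := hFbound r hr
          linarith [hc]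
  have hs1 : Real.sqrt (Real.log R) ≤ 1 + Real.log R := by
    have h2 := Real.sqrt_le_sqrt (show Real.log R ≤ (1 + Real.log R)^2 by nlinarith [hlogR.le])
    rwa [Real.sqrt_sq (by linarith)] at h2
  have hs2 : 1 ≤ Real.sqrt (R / (R - 1)) := by
    have hd : (1:ℝ) ≤ R / (R - 1) := (one_le_div (by linarith)).mpr (by linarith)
    calc (1:ℝ) = Real.sqrt 1 := Real.sqrt_one.symm
      _ ≤ Real.sqrt (R / (R - 1)) := Real.sqrt_le_sqrt hd
  refine le_trans hstep ?_
  have h1log : (0:ℝ) ≤ 1 + Real.log R := by linarith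
  nlinarith [mul_le_mul_of_nonneg_right hs1 hM0,
    mul_le_mul_of_nonneg_right hs2 (mul_nonneg h1log hM0)]
end
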